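/- Let A be a positive normalized linear functional on L, let f ∈ C^n([a,b]), let 3 ≤ m ≤ n−1, and let g ∈ L with f∘g ∈ L. Then LR(f,g,a,b,A) = (b−A(g))·(f[a,b] − f[b,b]) + Σ_{k=2}^{m-1} (f^{(k)}(b)/k!) · A[(g−b1)^k] + Σ_{k=1}^{n-m} f[b,…,b (m times); a,…,a (k times)] · A[(g−b1)^m (g−a1)^{k−1}] + A(R*_m(g)), where R*_m(t) = (t−b)^m (t−a)^{n−m} · f[t; b,…,b (m times); a,…,a ((n−m) times)]. -/

import Mathlib

/-- Divided difference of `f` at a (sorted) list of points, with repeated points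
handled via derivatives (taken within the set `s`). -/
noncomputable def divDiff (s : Set ℝ) (f : ℝ → ℝ) : List ℝ → ℝ
  | [] => 0
  | [x] => f x
  | x :: y :: l =>
    if x = (y :: l).getLast (List.cons_ne_nil y l) then
      iteratedDerivWithin (l.length + 1) f s x / Nat.factorial (l.length + 1)
    else
      (divDiff s f (y :: l) - divDiff s f (x :: (y :: l).dropLast)) /
        ((y :: l).getLast (List.cons_ne_nil y l) - x)
termination_by l => l.length
decreasing_by
  all_goals simp [List.length_dropLast]


lemma divDiff_single (s f x) : divDiff s f [x] = f x := by rw [divDiff]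

lemma divDiff_cons_ne (s : Set ℝ) (f : ℝ → ℝ) (p : ℝ) (L : List ℝ) (hL : L ≠ [])
    (h : p ≠ L.getLast hL) :
    divDiff s f (p :: L) =
      (divDiff s f L - divDiff s f (p :: L.dropLast)) / (L.getLast hL - p) := by
  obtain ⟨y, l, rfl⟩ := List.exists_cons_of_ne_nil hL
  rw [divDiff, if_neg h]

/-- `DD k m = f[a,…,a (k), x, b,…,b (m)]`. -/
noncomputable def DD (s : Set ℝ) (f : ℝ → ℝ) (a b x : ℝ) (k m : ℕ) : ℝ :=
  divDiff s f (List.replicate k a ++ x :: List.replicate m b)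

/-- `MM k m = f[a,…,a (k), b,…,b (m)]`. -/
noncomputable def MM (s : Set ℝ) (f : ℝ → ℝ) (a b : ℝ) (k m : ℕ) : ℝ :=
  divDiff s f (List.replicate k a ++ List.replicate m b)

section recs
variable (s : Set ℝ) (f : ℝ → ℝ) {a b : ℝ} (x : ℝ)

lemma list_split_a (k : ℕ) (L : List ℝ) :
    List.replicate (k+1) a ++ L = a :: (List.replicate k a ++ L) := by
  simp [List.replicate_succ]

lemma list_split_b (k m : ℕ) :
    List.replicate k a ++ x :: List.replicate (m+1) b
      = (List.replicate k a ++ x :: List.replicate m b) ++ [b] := by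
  rw [List.replicate_succ' (n := m), List.append_assoc, List.cons_append]

lemma list_split_b' (k m : ℕ) :
    List.replicate k a ++ List.replicate (m+1) b
      = (List.replicate k a ++ List.replicate m b) ++ [b] := by
  simp [List.replicate_succ' (n := m), ← List.append_assoc]

lemma R1 (hab : a ≠ b) (k m : ℕ) :
    (b - a) * DD s f a b x (k+1) (m+1)
      = DD s f a b x k (m+1) - DD s f a b x (k+1) m := by
  have hba : b - a ≠ 0 := sub_ne_zero.mpr (Ne.symm hab)
  unfold DD
  rw [list_split_a, list_split_b]
  rw [divDiff_cons_ne s f a _ (by simp) (by simp [hab])]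
  rw [List.getLast_concat, List.dropLast_concat, ← list_split_a]
  field_simp

lemma R1M (hab : a ≠ b) (k m : ℕ) :
    (b - a) * MM s f a b (k+1) (m+1)
      = MM s f a b k (m+1) - MM s f a b (k+1) m := by
  have hba : b - a ≠ 0 := sub_ne_zero.mpr (Ne.symm hab)
  unfold MM
  rw [list_split_a, list_split_b']
  rw [divDiff_cons_ne s f a _ (by simp) (by simp [hab])]
  rw [List.getLast_concat, List.dropLast_concat, ← list_split_a]
  field_simp

lemma R2 (hxb : x ≠ b) (m : ℕ) :
    (b - x) * DD s f a b x 0 (m+1) = MM s f a b 0 (m+1) - DD s f a b x 0 m := by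
  have hbx : b - x ≠ 0 := sub_ne_zero.mpr (Ne.symm hxb)
  unfold DD MM
  simp only [List.replicate_zero, List.nil_append]
  rw [show List.replicate (m+1) b = List.replicate m b ++ [b] from List.replicate_succ' ..]
  rw [divDiff_cons_ne s f x _ (by simp) (by simpa using hxb)]
  rw [List.getLast_concat, List.dropLast_concat]
  field_simp

lemma R3 (hxa : x ≠ a) (k : ℕ) :
    (x - a) * DD s f a b x (k+1) 0 = DD s f a b x k 0 - MM s f a b (k+1) 0 := by
  have hax : x - a ≠ 0 := sub_ne_zero.mpr hxa
  unfold DD MM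
  simp only [List.replicate_zero, List.append_nil]
  rw [list_split_a]
  rw [divDiff_cons_ne s f a _ (by simp) (by simp [Ne.symm hxa])]
  rw [List.dropLast_concat, ← List.replicate_succ]
  have hgl : (List.replicate k a ++ [x]).getLast (by simp) = x := by simp
  rw [hgl]
  field_simp

lemma rep_cons (c : ℝ) (k : ℕ) (L : List ℝ) :
    List.replicate k c ++ c :: L = List.replicate (k+1) c ++ L := by
  rw [List.replicate_succ' (n := k), List.append_assoc]
  simp

lemma E1 (k m : ℕ) : DD s f a b b k m = MM s f a b k (m+1) := by
  unfold DD MM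
  rw [List.replicate_succ]

lemma E2 (k m : ℕ) : DD s f a b a k m = MM s f a b (k+1) m := by
  unfold DD MM
  rw [rep_cons]

lemma T0 (k : ℕ) :
    (x - a) * DD s f a b x (k+1) 0 = DD s f a b x k 0 - MM s f a b (k+1) 0 := by
  by_cases hxa : x = a
  · subst hxa
    simp only [E2]
    ring
  · exact R3 s f x hxa k

lemma Sstep (hab : a ≠ b) (j : ℕ)
    (hPj : ∀ k, (x - a) * DD s f a b x (k+1) j = DD s f a b x k j - MM s f a b (k+1) j) :
    ∀ k, (b - x) * DD s f a b x k (j+1) = MM s f a b k (j+1) - DD s f a b x k j := by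
  intro k
  induction k with
  | zero =>
    by_cases hxb : x = b
    · subst hxb
      simp only [E1]
      ring
    · exact R2 s f x hxb j
  | succ k ih =>
    have hba : b - a ≠ 0 := sub_ne_zero.mpr (Ne.symm hab)
    apply mul_left_cancel₀ hba
    linear_combination (b - x) * (R1 s f x hab k j) + ih + hPj k - (R1M s f hab k j)

lemma Tstep (hab : a ≠ b) (j : ℕ)
    (hS : ∀ k, (b - x) * DD s f a b x k (j+1) = MM s f a b k (j+1) - DD s f a b x k j) :
    ∀ k, (x - a) * DD s f a b x (k+1) (j+1)
      = DD s f a b x k (j+1) - MM s f a b (k+1) (j+1) := by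
  intro k
  linear_combination (R1 s f x hab k j) - hS (k+1)

lemma Pall (hab : a ≠ b) : ∀ j k,
    (x - a) * DD s f a b x (k+1) j = DD s f a b x k j - MM s f a b (k+1) j := by
  intro j
  induction j with
  | zero => exact T0 s f x
  | succ j ih => exact Tstep s f x hab j (Sstep s f x hab j ih)

lemma Sall (hab : a ≠ b) (j : ℕ) :
    ∀ k, (b - x) * DD s f a b x k (j+1) = MM s f a b k (j+1) - DD s f a b x k j :=
  Sstep s f x hab j (Pall s f x hab j)

end recs

section tel
variable (s : Set ℝ) (f : ℝ → ℝ) {a b : ℝ} (x : ℝ)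

lemma DD00 : DD s f a b x 0 0 = f x := by
  unfold DD
  simp [divDiff_single]

lemma MM01 : MM s f a b 0 1 = f b := by
  unfold MM
  simp [divDiff_single]

lemma glrep (c : ℝ) (m : ℕ) (h) : (c :: List.replicate m c).getLast h = c := by
  rcases m with _ | m <;> simp [List.getLast_eq_getElem, List.getElem_replicate]

lemma MM0m (j : ℕ) (hj : 2 ≤ j) :
    MM s f a b 0 j = iteratedDerivWithin (j-1) f s b / Nat.factorial (j-1) := by
  obtain ⟨j₀, rfl⟩ : ∃ j₀, j = j₀ + 2 := ⟨j - 2, by omega⟩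
  unfold MM
  simp only [List.replicate_zero, List.nil_append]
  rw [List.replicate_succ, List.replicate_succ]
  rw [divDiff, if_pos (by rw [glrep])]
  simp

lemma MM02 : MM s f a b 0 2 = divDiff s f [b, b] := by
  unfold MM
  congr 1

lemma tel1 (hab : a ≠ b) (J : ℕ) :
    f x = (∑ j ∈ Finset.range J, MM s f a b 0 (j+1) * (x-b)^j)
      + (x-b)^J * DD s f a b x 0 J := by
  induction J with
  | zero => simp [DD00]
  | succ J ih =>
    rw [ih, Finset.sum_range_succ]
    linear_combination ((x-b)^J) * (Sall s f x hab J 0)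

lemma tel2 (hab : a ≠ b) (m K : ℕ) :
    DD s f a b x 0 (m+1) = (∑ k ∈ Finset.range K, MM s f a b (k+1) (m+1) * (x-a)^k)
      + (x-a)^K * DD s f a b x K (m+1) := by
  induction K with
  | zero => simp
  | succ K ih =>
    rw [ih, Finset.sum_range_succ]
    linear_combination (-(x-a)^K) * (Pall s f x hab (m+1) K)

end tel

lemma dab_eq (s : Set ℝ) (f : ℝ → ℝ) {a b : ℝ} (hab : a ≠ b) :
    divDiff s f [a, b] = (f b - f a) / (b - a) := by
  rw [divDiff_cons_ne s f a [b] (by simp) (by simpa using hab)]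
  simp [divDiff_single]

lemma pointwise (s : Set ℝ) (f : ℝ → ℝ) {a b : ℝ} (hab : a < b) (x : ℝ) (m K : ℕ)
    (hm : 2 ≤ m) (hK : 1 ≤ K) :
    f x = (b-x)/(b-a) * f a + (x-a)/(b-a) * f b
      + (b-x) * (divDiff s f [a, b] - divDiff s f [b, b])
      + (∑ k ∈ Finset.Icc 2 (m-1),
          iteratedDerivWithin k f s b / Nat.factorial k * (x-b)^k)
      + (∑ k ∈ Finset.Icc 1 K,
          divDiff s f (List.replicate k a ++ List.replicate m b)
            * ((x-b)^m * (x-a)^(k-1)))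
      + (x-b)^m * (x-a)^K
          * divDiff s f (List.replicate K a ++ x :: List.replicate m b) := by
  have hab' : a ≠ b := hab.ne
  have hba : b - a ≠ 0 := sub_ne_zero.mpr hab.ne'
  obtain ⟨m₀, rfl⟩ : ∃ m₀, m = m₀ + 1 := ⟨m - 1, by omega⟩
  -- telescoping
  have h1 := tel1 s f x hab' (m₀+1)
  have h2 := tel2 s f x hab' m₀ K
  -- split head of first sum
  have hsplit : (∑ j ∈ Finset.range (m₀+1), MM s f a b 0 (j+1) * (x-b)^j)
      = MM s f a b 0 1 * (x-b)^0 + MM s f a b 0 2 * (x-b)^1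
        + ∑ j ∈ Finset.Ico 2 (m₀+1), MM s f a b 0 (j+1) * (x-b)^j := by
    rw [Finset.range_eq_Ico,
      ← Finset.sum_Ico_consecutive _ (Nat.zero_le 2) (by omega : 2 ≤ m₀+1)]
    congr 1
    rw [← Finset.range_eq_Ico]
    simp [Finset.sum_range_succ]
  -- identify middle sum
  have hsum1 : (∑ j ∈ Finset.Ico 2 (m₀+1), MM s f a b 0 (j+1) * (x-b)^j)
      = ∑ k ∈ Finset.Icc 2 (m₀+1-1),
          iteratedDerivWithin k f s b / Nat.factorial k * (x-b)^k := by
    rw [show Finset.Icc 2 (m₀+1-1) = Finset.Ico 2 (m₀+1) from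
      (Finset.Ico_add_one_right_eq_Icc ..).symm]
    refine Finset.sum_congr rfl fun j hj => ?_
    have hj2 : 2 ≤ j := (Finset.mem_Ico.mp hj).1
    rw [MM0m s f (j+1) (by omega)]
    simp
  -- identify last sum
  have hsum2 : (∑ k ∈ Finset.Icc 1 K,
        divDiff s f (List.replicate k a ++ List.replicate (m₀+1) b)
          * ((x-b)^(m₀+1) * (x-a)^(k-1)))
      = (x-b)^(m₀+1) * ∑ k ∈ Finset.range K, MM s f a b (k+1) (m₀+1) * (x-a)^k := by
    rw [Finset.mul_sum, ← Finset.Ico_add_one_right_eq_Icc, Finset.sum_Ico_eq_sum_range]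
    refine Finset.sum_congr rfl fun k _ => ?_
    have : (1 + k) - 1 = k := by omega
    rw [this, show 1 + k = k + 1 by omega]
    unfold MM
    ring
  have hDD : DD s f a b x K (m₀+1)
      = divDiff s f (List.replicate K a ++ x :: List.replicate (m₀+1) b) := rfl
  rw [hsum2, dab_eq s f hab', h1, hsplit, hsum1, h2, hDD, MM01, MM02]
  field_simp
  ring


/-- Identity (2.10) of Lemma 2.2: the mirror `(m, n-m)` Hermite expansion of the
Edmundson–Lah–Ribarič difference `LR(f,g,a,b,A)`, for `3 ≤ m ≤ n-1`. -/
theorem lemma22_general_m {E : Type*} [Nonempty E]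
    (a b : ℝ) (hab : a < b) (n m : ℕ) (hm : 3 ≤ m) (hmn : m + 1 ≤ n)
    (f : ℝ → ℝ) (hf : ContDiffOn ℝ n f (Set.Icc a b))
    (A : (E → ℝ) →ₗ[ℝ] ℝ)
    (hApos : ∀ h : E → ℝ, (∀ t, 0 ≤ h t) → 0 ≤ A h)
    (hA1 : A (fun _ => (1 : ℝ)) = 1)
    (g : E → ℝ) (hg : ∀ t, g t ∈ Set.Icc a b) :
    A (fun t => f (g t)) - (b - A g) / (b - a) * f a - (A g - a) / (b - a) * f b =
      (b - A g) * (divDiff (Set.Icc a b) f [a, b] - divDiff (Set.Icc a b) f [b, b]) +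
      (∑ k ∈ Finset.Icc 2 (m - 1),
        iteratedDerivWithin k f (Set.Icc a b) b / Nat.factorial k *
          A (fun t => (g t - b) ^ k)) +
      (∑ k ∈ Finset.Icc 1 (n - m),
        divDiff (Set.Icc a b) f (List.replicate k a ++ List.replicate m b) *
          A (fun t => (g t - b) ^ m * (g t - a) ^ (k - 1))) +
      A (fun t => (g t - b) ^ m * (g t - a) ^ (n - m) *
          divDiff (Set.Icc a b) f
            (List.replicate (n - m) a ++ g t :: List.replicate m b)) := by
  set s := Set.Icc a b with hs
  set dab := divDiff s f [a, b] with hdab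
  set dbb := divDiff s f [b, b] with hdbb
  set cc : ℕ → ℝ := fun k => iteratedDerivWithin k f s b / Nat.factorial k with hcc
  set dd : ℕ → ℝ := fun k => divDiff s f (List.replicate k a ++ List.replicate m b)
    with hdd
  set w : E → ℝ := fun t => (g t - b) ^ m * (g t - a) ^ (n - m) *
      divDiff s f (List.replicate (n - m) a ++ g t :: List.replicate m b) with hw
  have hadd : ∀ u v : E → ℝ, A (fun t => u t + v t) = A u + A v :=
    fun u v => map_add A u v
  have hsmul : ∀ (c : ℝ) (u : E → ℝ), A (fun t => c * u t) = c * A u :=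
    fun c u => map_smul A c u
  have hconst : ∀ c : ℝ, A (fun _ => c) = c := by
    intro c
    rw [show (fun _ : E => c) = fun t => c * (fun _ : E => (1:ℝ)) t from by
      funext t; ring, hsmul, hA1, mul_one]
  have hB1 : A (fun t => b - g t) = b - A g := by
    rw [show (fun t => b - g t) = (fun _ : E => b) - g from rfl, map_sub, hconst]
  have hB2 : A (fun t => g t - a) = A g - a := by
    rw [show (fun t => g t - a) = g - (fun _ : E => a) from rfl, map_sub, hconst]
  have hS2 : A (fun t => ∑ k ∈ Finset.Icc 2 (m-1), cc k * (g t - b) ^ k)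
      = ∑ k ∈ Finset.Icc 2 (m-1), cc k * A (fun t => (g t - b) ^ k) := by
    rw [show (fun t => ∑ k ∈ Finset.Icc 2 (m-1), cc k * (g t - b) ^ k)
        = ∑ k ∈ Finset.Icc 2 (m-1), (fun t => cc k * (g t - b) ^ k) from by
      funext t; rw [Finset.sum_apply]]
    rw [map_sum]
    exact Finset.sum_congr rfl fun k _ => hsmul _ _
  have hS3 : A (fun t => ∑ k ∈ Finset.Icc 1 (n-m),
        dd k * ((g t - b) ^ m * (g t - a) ^ (k-1)))
      = ∑ k ∈ Finset.Icc 1 (n-m),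
          dd k * A (fun t => (g t - b) ^ m * (g t - a) ^ (k-1)) := by
    rw [show (fun t => ∑ k ∈ Finset.Icc 1 (n-m),
          dd k * ((g t - b) ^ m * (g t - a) ^ (k-1)))
        = ∑ k ∈ Finset.Icc 1 (n-m),
            (fun t => dd k * ((g t - b) ^ m * (g t - a) ^ (k-1))) from by
      funext t; rw [Finset.sum_apply]]
    rw [map_sum]
    exact Finset.sum_congr rfl fun k _ => hsmul _ _
  have key : ∀ t, f (g t)
      = (f a / (b-a)) * (b - g t) + ((f b / (b-a)) * (g t - a)
        + ((dab - dbb) * (b - g t)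
        + ((∑ k ∈ Finset.Icc 2 (m-1), cc k * (g t - b) ^ k)
        + ((∑ k ∈ Finset.Icc 1 (n-m), dd k * ((g t - b) ^ m * (g t - a) ^ (k-1)))
        + w t)))) := by
    intro t
    have := pointwise s f hab (g t) m (n - m) (by omega) (by omega)
    rw [this, hw]
    ring
  have hF : A (fun t => f (g t))
      = (f a / (b-a)) * (b - A g) + ((f b / (b-a)) * (A g - a)
        + ((dab - dbb) * (b - A g)
        + ((∑ k ∈ Finset.Icc 2 (m-1), cc k * A (fun t => (g t - b) ^ k))
        + ((∑ k ∈ Finset.Icc 1 (n-m),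
              dd k * A (fun t => (g t - b) ^ m * (g t - a) ^ (k-1)))
        + A w)))) := by
    rw [show (fun t => f (g t)) = fun t => (f a / (b-a)) * (b - g t)
        + ((f b / (b-a)) * (g t - a)
        + ((dab - dbb) * (b - g t)
        + ((∑ k ∈ Finset.Icc 2 (m-1), cc k * (g t - b) ^ k)
        + ((∑ k ∈ Finset.Icc 1 (n-m), dd k * ((g t - b) ^ m * (g t - a) ^ (k-1)))
        + w t)))) from by funext t; exact key t]
    rw [hadd, hadd, hadd, hadd, hadd, hsmul, hsmul, hsmul, hB1, hB2, hS2, hS3]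
  rw [hF]
  ring
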